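/- Let X be a locally compact Hausdorff zero-dimensional space. Under the canonical embedding x ↦ x̂ of X into S(CO(X)), a clopen set U ∈ CO(X) satisfies s_{CO(X)}(U) ⊆ X̂ if and only if U is compact. Hence the ideal {U ∈ CO(X) : s_{CO(X)}(U) ⊆ X̂} equals KO(X), the set of compact open subsets of X. -/
import Mathlib


open TopologicalSpace

def sA {A : Type*} [BooleanAlgebra A] (a : A) : Set (BoundedLatticeHom A Bool) :=
  {x | x a = true}

instance stoneTopology (A : Type*) [BooleanAlgebra A] :
    TopologicalSpace (BoundedLatticeHom A Bool) :=
  TopologicalSpace.generateFrom (Set.range (sA (A := A)))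

lemma stmt17_aux_compl {X : Type*} [TopologicalSpace X]
    (f : BoundedLatticeHom (Clopens X) Bool) (V : Clopens X) (hV : f V = false) :
    f Vᶜ = true := by
  have h1 : f V ⊔ f Vᶜ = ⊤ := by
    rw [← map_sup, sup_compl_eq_top, map_top]
  cases h2 : f Vᶜ with
  | true => rfl
  | false => rw [hV, h2] at h1; exact absurd h1 (by decide)

/-- for a locally compact Hausdorff zero-dimensional space `X` and the
canonical embedding `x ↦ x̂` into `S(CO(X))`, a clopen `U` satisfies
`s_{CO(X)}(U) ⊆ X̂` iff `U` is compact; hence `{U ∈ CO(X) : s(U) ⊆ X̂} = KO(X)`. -/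
theorem stmt17 {X : Type*} [TopologicalSpace X] [T2Space X] [LocallyCompactSpace X]
    (hzd : ∀ (x : X) (U : Set X), IsOpen U → x ∈ U →
      ∃ V : Set X, IsClopen V ∧ x ∈ V ∧ V ⊆ U)
    (h : X → BoundedLatticeHom (Clopens X) Bool)
    (hh : ∀ (x : X) (U : Clopens X), h x U = true ↔ x ∈ U) :
    (∀ U : Clopens X, sA U ⊆ Set.range h ↔ IsCompact (U : Set X)) ∧
    {U : Clopens X | sA U ⊆ Set.range h} = {U : Clopens X | IsCompact (U : Set X)} := by
  have key : ∀ U : Clopens X, sA U ⊆ Set.range h ↔ IsCompact (U : Set X) := by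
    intro U
    constructor
    · -- sA U ⊆ range h → U compact
      intro hsub
      by_contra hnc
      -- the filter of cocompact subsets of U
      have hbasis : (Filter.principal (U : Set X) ⊓ Filter.cocompact X).HasBasis
          IsCompact (fun K => (U : Set X) ∩ Kᶜ) := by
        simpa [Set.inter_comm] using
          (Filter.hasBasis_cocompact (X := X)).principal_inf (U : Set X)
      have hne : (Filter.principal (U : Set X) ⊓ Filter.cocompact X).NeBot := by
        rw [hbasis.neBot_iff]
        intro K hK
        rw [Set.nonempty_iff_ne_empty]
        intro hemp
        have : (U : Set X) ⊆ K := by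
          intro x hx
          by_contra hxK
          exact Set.eq_empty_iff_forall_notMem.mp hemp x ⟨hx, hxK⟩
        exact hnc (hK.of_isClosed_subset U.isClopen.isClosed this)
      haveI := hne
      set G := Ultrafilter.of (Filter.principal (U : Set X) ⊓ Filter.cocompact X) with hG
      have hGle : (G : Filter X) ≤ Filter.principal (U : Set X) ⊓ Filter.cocompact X :=
        Ultrafilter.of_le _
      have hfU : (U : Set X) ∈ G :=
        Filter.le_principal_iff.mp (hGle.trans inf_le_left)
      classical
      -- construct the hom
      let f : BoundedLatticeHom (Clopens X) Bool :=
        { toFun := fun V => decide ((V : Set X) ∈ G)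
          map_sup' := fun V W => by
            by_cases hV : (V : Set X) ∈ G <;> by_cases hW : (W : Set X) ∈ G <;>
              simp [Clopens.coe_sup, Ultrafilter.union_mem_iff, hV, hW]
          map_inf' := fun V W => by
            by_cases hV : (V : Set X) ∈ G <;> by_cases hW : (W : Set X) ∈ G <;>
              simp_all [Clopens.coe_inf, ← Ultrafilter.mem_coe,
                Filter.inter_mem_iff (f := (G : Filter X))]
          map_top' := by simp [Clopens.coe_top, ← Ultrafilter.mem_coe, Filter.univ_mem]
          map_bot' := by
            simp [Clopens.coe_bot, Filter.empty_notMem (G : Filter X)] }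
      have hfmem : f ∈ sA U := by
        simp only [sA, Set.mem_setOf_eq]
        show decide ((U : Set X) ∈ G) = true
        simpa using hfU
      obtain ⟨x, hx⟩ := hsub hfmem
      -- x ∈ U
      have hxU : x ∈ U := by
        rw [← hh x U, hx]
        show decide ((U : Set X) ∈ G) = true
        simpa using hfU
      -- get a compact clopen neighborhood of x
      obtain ⟨K, hKc, hKmem⟩ := exists_compact_mem_nhds x
      obtain ⟨W, hWc, hxW, hWK⟩ := hzd x (interior K) isOpen_interior
        (mem_interior_iff_mem_nhds.mpr hKmem)
      have hWcomp : IsCompact W := hKc.of_isClosed_subset hWc.isClosed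
        (hWK.trans interior_subset)
      set V : Clopens X := ⟨W, hWc⟩ with hV
      have h1 : h x V = true := (hh x V).mpr hxW
      have h2 : f V = false := by
        show decide ((V : Set X) ∈ G) = false
        have : (V : Set X)ᶜ ∈ G := hGle (by
          exact Filter.mem_inf_of_right (hWcomp.compl_mem_cocompact))
        have : (V : Set X) ∉ G := (Ultrafilter.compl_mem_iff_notMem.mp this)
        simpa using this
      rw [← hx, h1] at h2
      exact absurd h2 (by simp)
    · -- U compact → sA U ⊆ range h
      intro hU f hf
      have hfU : f U = true := hf
      -- the index type of clopens in the "ultrafilter" f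
      let ι := {V : Clopens X // f V = true}
      haveI : Nonempty ι := ⟨⟨U, hfU⟩⟩
      let F : Filter X := ⨅ V : ι, Filter.principal (V.1 : Set X)
      have hdir : Directed (· ≥ ·) (fun V : ι => Filter.principal (V.1 : Set X)) := by
        rintro ⟨V, hV⟩ ⟨W, hW⟩
        refine ⟨⟨V ⊓ W, ?_⟩, ?_, ?_⟩
        · rw [map_inf, hV, hW]; rfl
        · simp [Filter.principal_mono, Clopens.coe_inf]
        · simp [Filter.principal_mono, Clopens.coe_inf]
      have hFne : F.NeBot := by
        apply Filter.iInf_neBot_of_directed' hdir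
        rintro ⟨V, hV⟩
        rw [Filter.principal_neBot_iff, Set.nonempty_iff_ne_empty]
        intro hemp
        have : V = ⊥ := by
          apply SetLike.coe_injective
          simpa using hemp
        rw [this, map_bot] at hV
        exact absurd hV (by simp)
      have hFle : F ≤ Filter.principal (U : Set X) :=
        iInf_le (fun V : ι => Filter.principal (V.1 : Set X)) ⟨U, hfU⟩
      obtain ⟨x, hxU, hcl⟩ := hU hFle
      -- x lies in every V with f V = true
      have hmem : ∀ V : Clopens X, f V = true → x ∈ V := by
        intro V hV
        have hle : F ≤ Filter.principal (V : Set X) :=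
          iInf_le (fun V : ι => Filter.principal (V.1 : Set X)) ⟨V, hV⟩
        have : ClusterPt x (Filter.principal (V : Set X)) := hcl.mono hle
        have hxcl : x ∈ closure (V : Set X) := mem_closure_iff_clusterPt.mpr this
        rwa [V.isClopen.isClosed.closure_eq] at hxcl
      refine ⟨x, ?_⟩
      apply DFunLike.ext
      intro V
      cases hfV : f V with
      | true => rw [(hh x V).mpr (hmem V hfV)]
      | false =>
        have : x ∈ Vᶜ := hmem Vᶜ (stmt17_aux_compl f V hfV)
        have hxV : x ∉ V := by
          intro hxV
          have : x ∈ (V : Set X) ∩ (V : Set X)ᶜ := ⟨hxV, this⟩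
          simp at this
        cases hhx : h x V with
        | true => exact absurd ((hh x V).mp hhx) hxV
        | false => rfl
  exact ⟨key, Set.ext fun U => key U⟩
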